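/- Let H, K be Hilbert spaces, N : H → K compact linear with dense range, and h ∈ K with h ≠ 0. Define G : (0,∞) → ℝ by G(α) = ‖N φ_α - h‖² - ε², where φ_α = (αI + N*N)⁻¹N*h and 0 < ε < ‖h‖. Then α ↦ ‖Nφ_α - h‖² is continuous and monotonically increasing on (0,∞), tends to ‖h‖² as α → ∞, and the discrepancy G has at least one zero if lim_{α→0⁺} ‖Nφ_α - h‖ < ε. -/

import Mathlib

open Filter
open scoped ComplexInnerProductSpace

section Aux

variable {H K : Type*}
    [NormedAddCommGroup H] [InnerProductSpace ℂ H] [CompleteSpace H]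
    [NormedAddCommGroup K] [InnerProductSpace ℂ K] [CompleteSpace K]

lemma aux_energy (N : H →L[ℂ] K) (h : K) (α : ℝ) (x : H)
    (hx : (α : ℂ) • x + ContinuousLinearMap.adjoint N (N x)
        = ContinuousLinearMap.adjoint N h) :
    α * ‖x‖^2 + ‖N x‖^2 = Complex.re (⟪ContinuousLinearMap.adjoint N h, x⟫) := by
  have h1 : ⟪(α : ℂ) • x + ContinuousLinearMap.adjoint N (N x), x⟫
      = ⟪ContinuousLinearMap.adjoint N h, x⟫ := by rw [hx]
  rw [inner_add_left] at h1
  have h2 := congrArg Complex.re h1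
  rw [Complex.add_re, inner_smul_left, Complex.conj_ofReal, Complex.re_ofReal_mul,
    ContinuousLinearMap.adjoint_inner_left] at h2
  have nsq1 : (⟪x, x⟫ : ℂ).re = ‖x‖^2 := inner_self_eq_norm_sq (𝕜 := ℂ) x
  have nsq2 : (⟪N x, N x⟫ : ℂ).re = ‖N x‖^2 := inner_self_eq_norm_sq (𝕜 := ℂ) (N x)
  rw [nsq1, nsq2] at h2
  exact h2

lemma aux_norm_bound (N : H →L[ℂ] K) (h : K) (α : ℝ) (hα : 0 < α) (x : H)
    (hx : (α : ℂ) • x + ContinuousLinearMap.adjoint N (N x)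
        = ContinuousLinearMap.adjoint N h) :
    α * ‖x‖ ≤ ‖ContinuousLinearMap.adjoint N h‖ := by
  have h1 := aux_energy N h α x hx
  have h2 : Complex.re (⟪ContinuousLinearMap.adjoint N h, x⟫)
      ≤ ‖ContinuousLinearMap.adjoint N h‖ * ‖x‖ :=
    le_trans (Complex.re_le_norm _)
      (by exact norm_inner_le_norm _ _)
  rcases eq_or_lt_of_le (norm_nonneg x) with h0 | h0
  · rw [← h0]; simp
  · have h3 : (α * ‖x‖) * ‖x‖ ≤ ‖ContinuousLinearMap.adjoint N h‖ * ‖x‖ := by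
      nlinarith [sq_nonneg ‖N x‖]
    exact le_of_mul_le_mul_right h3 h0

lemma aux_diff (N : H →L[ℂ] K) (h : K) (α β : ℝ) (hα : 0 < α) (x y : H)
    (hx : (α : ℂ) • x + ContinuousLinearMap.adjoint N (N x)
        = ContinuousLinearMap.adjoint N h)
    (hy : (β : ℂ) • y + ContinuousLinearMap.adjoint N (N y)
        = ContinuousLinearMap.adjoint N h) :
    α * ‖x - y‖ ≤ |β - α| * ‖y‖ := by
  set A := ContinuousLinearMap.adjoint N with hA
  set d := x - y with hd
  have ex : A (N x) = A h - (α : ℂ) • x := by rw [← hx]; abel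
  have ey : A (N y) = A h - (β : ℂ) • y := by rw [← hy]; abel
  have heq : (α : ℂ) • d + A (N d) = ((β - α : ℝ) : ℂ) • y := by
    push_cast
    simp only [hd, map_sub, smul_sub, ex, ey]
    module
  have h1 : ⟪(α : ℂ) • d + A (N d), d⟫ = ⟪((β - α : ℝ) : ℂ) • y, d⟫ := by rw [heq]
  rw [inner_add_left] at h1
  have h2 := congrArg Complex.re h1
  rw [Complex.add_re, inner_smul_left, inner_smul_left, Complex.conj_ofReal,
    Complex.conj_ofReal, Complex.re_ofReal_mul, Complex.re_ofReal_mul,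
    ContinuousLinearMap.adjoint_inner_left] at h2
  have nsq1 : (⟪d, d⟫ : ℂ).re = ‖d‖^2 := inner_self_eq_norm_sq (𝕜 := ℂ) d
  have nsq2 : (⟪N d, N d⟫ : ℂ).re = ‖N d‖^2 := inner_self_eq_norm_sq (𝕜 := ℂ) (N d)
  rw [nsq1, nsq2] at h2
  have h3 : (β - α) * (⟪y, d⟫ : ℂ).re ≤ |β - α| * ‖y‖ * ‖d‖ := by
    calc (β - α) * (⟪y, d⟫ : ℂ).re ≤ |β - α| * |(⟪y, d⟫ : ℂ).re| :=
          le_trans (le_abs_self _) (le_of_eq (abs_mul _ _))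
      _ ≤ |β - α| * ‖(⟪y, d⟫ : ℂ)‖ :=
          mul_le_mul_of_nonneg_left (Complex.abs_re_le_norm _) (abs_nonneg _)
      _ ≤ |β - α| * (‖y‖ * ‖d‖) :=
          mul_le_mul_of_nonneg_left (norm_inner_le_norm _ _) (abs_nonneg _)
      _ = |β - α| * ‖y‖ * ‖d‖ := by ring
  have h4 : α * ‖d‖^2 ≤ |β - α| * ‖y‖ * ‖d‖ := by nlinarith [sq_nonneg ‖N d‖]
  rcases eq_or_lt_of_le (norm_nonneg d) with h0 | h0
  · rw [← h0]; simp; positivity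
  · have h5 : (α * ‖d‖) * ‖d‖ ≤ (|β - α| * ‖y‖) * ‖d‖ := by nlinarith
    exact le_of_mul_le_mul_right h5 h0

lemma aux_min (N : H →L[ℂ] K) (h : K) (α : ℝ) (hα : 0 < α) (x : H)
    (hx : (α : ℂ) • x + ContinuousLinearMap.adjoint N (N x)
        = ContinuousLinearMap.adjoint N h) (ψ : H) :
    ‖N x - h‖^2 + α * ‖x‖^2 ≤ ‖N ψ - h‖^2 + α * ‖ψ‖^2 := by
  set w := ψ - x with hw
  have hψ : ψ = x + w := by rw [hw]; abel
  have hNψ : N ψ - h = (N x - h) + N w := by rw [hψ, map_add]; abel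
  have e1 : ‖N ψ - h‖^2 = ‖N x - h‖^2 + 2 * Complex.re ⟪N x - h, N w⟫ + ‖N w‖^2 := by
    rw [hNψ]; exact norm_add_sq (𝕜 := ℂ) _ _
  have e2 : ‖ψ‖^2 = ‖x‖^2 + 2 * Complex.re ⟪x, w⟫ + ‖w‖^2 := by
    rw [hψ]; exact norm_add_sq (𝕜 := ℂ) _ _
  have cross : Complex.re ⟪N x - h, N w⟫ + α * Complex.re ⟪x, w⟫ = 0 := by
    have c1 : (⟪N x - h, N w⟫ : ℂ)
        = ⟪ContinuousLinearMap.adjoint N (N x) - ContinuousLinearMap.adjoint N h, w⟫ := by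
      rw [← ContinuousLinearMap.adjoint_inner_left, map_sub]
    have c3 : (⟪N x - h, N w⟫ : ℂ) + ⟪(α : ℂ) • x, w⟫
        = ⟪(α : ℂ) • x + ContinuousLinearMap.adjoint N (N x) - ContinuousLinearMap.adjoint N h, w⟫ := by
      rw [c1, ← inner_add_left]
      congr 1
      abel
    have c4 : (α : ℂ) • x + ContinuousLinearMap.adjoint N (N x) - ContinuousLinearMap.adjoint N h = 0 := by
      rw [hx]; abel
    rw [c4, inner_zero_left] at c3
    have h5 := congrArg Complex.re c3
    rw [Complex.add_re, inner_smul_left, Complex.conj_ofReal, Complex.re_ofReal_mul,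
      Complex.zero_re] at h5
    exact h5
  nlinarith [norm_nonneg (N w), norm_nonneg w, sq_nonneg ‖N w‖, sq_nonneg ‖w‖,
    mul_nonneg hα.le (sq_nonneg ‖w‖)]

end Aux

theorem stmt7 {H K : Type*}
    [NormedAddCommGroup H] [InnerProductSpace ℂ H] [CompleteSpace H]
    [NormedAddCommGroup K] [InnerProductSpace ℂ K] [CompleteSpace K]
    (N : H →L[ℂ] K) (hcomp : IsCompactOperator N) (hdense : DenseRange N)
    (h : K) (hh : h ≠ 0) (ε : ℝ) (hε : 0 < ε) (hεh : ε < ‖h‖)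
    (φ : ℝ → H)
    (hφ : ∀ α : ℝ, 0 < α →
      (α : ℂ) • φ α + ContinuousLinearMap.adjoint N (N (φ α))
        = ContinuousLinearMap.adjoint N h) :
    ContinuousOn (fun α => ‖N (φ α) - h‖ ^ 2) (Set.Ioi 0) ∧
    MonotoneOn (fun α => ‖N (φ α) - h‖ ^ 2) (Set.Ioi 0) ∧
    Tendsto (fun α => ‖N (φ α) - h‖ ^ 2) atTop (nhds (‖h‖ ^ 2)) ∧
    (∀ L : ℝ, Tendsto (fun α => ‖N (φ α) - h‖) (nhdsWithin 0 (Set.Ioi 0)) (nhds L) →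
      L < ε → ∃ α : ℝ, 0 < α ∧ ‖N (φ α) - h‖ ^ 2 - ε ^ 2 = 0) := by
  set C := ‖ContinuousLinearMap.adjoint N h‖ with hC
  -- continuity of φ on Ioi 0
  have hφcont : ContinuousOn φ (Set.Ioi 0) := by
    intro β hβ
    rw [Set.mem_Ioi] at hβ
    have key : Tendsto φ (nhdsWithin β (Set.Ioi 0)) (nhds (φ β)) := by
      rw [tendsto_iff_norm_sub_tendsto_zero]
      apply squeeze_zero' (g := fun α : ℝ => |β - α| * ‖φ β‖ / α)
      · filter_upwards with α using norm_nonneg _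
      · filter_upwards [self_mem_nhdsWithin] with α (hα : α ∈ Set.Ioi 0)
        rw [Set.mem_Ioi] at hα
        have hd := aux_diff N h α β hα (φ α) (φ β) (hφ α hα) (hφ β hβ)
        rw [le_div_iff₀ hα]
        linarith
      · have hc : ContinuousAt (fun α : ℝ => |β - α| * ‖φ β‖ / α) β := by
          apply ContinuousAt.div
          · exact (((continuous_const.sub continuous_id).abs).mul continuous_const).continuousAt
          · exact continuous_id.continuousAt
          · exact ne_of_gt hβ
        have h2 := hc.continuousWithinAt (s := Set.Ioi 0)
        rw [ContinuousWithinAt] at h2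
        simpa using h2
    exact key
  have hcont : ContinuousOn (fun α => ‖N (φ α) - h‖ ^ 2) (Set.Ioi 0) :=
    (((N.continuous).sub continuous_const).norm.pow 2).comp_continuousOn hφcont
  -- monotonicity
  have hmono : MonotoneOn (fun α => ‖N (φ α) - h‖ ^ 2) (Set.Ioi 0) := by
    intro a ha b hb hab
    rw [Set.mem_Ioi] at ha hb
    rcases eq_or_lt_of_le hab with rfl | hlt
    · exact le_refl _
    · simp only
      have h1 := aux_min N h a ha (φ a) (hφ a ha) (φ b)
      have h2 := aux_min N h b hb (φ b) (hφ b hb) (φ a)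
      have hv : ‖φ b‖^2 ≤ ‖φ a‖^2 := by
        by_contra hc
        push_neg at hc
        nlinarith [mul_pos (sub_pos.mpr hlt) (sub_pos.mpr hc)]
      nlinarith [mul_nonneg ha.le (sub_nonneg.mpr hv)]
  -- limit at infinity
  have hbound : ∀ α : ℝ, 0 < α → ‖φ α‖ ≤ C / α := by
    intro α hα
    rw [le_div_iff₀ hα]
    have := aux_norm_bound N h α hα (φ α) (hφ α hα)
    linarith
  have hnorm : ∀ α : ℝ, 0 < α → |‖N (φ α) - h‖ - ‖h‖| ≤ ‖N‖ * C / α := by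
    intro α hα
    have h1 : |‖N (φ α) - h‖ - ‖(-h : K)‖| ≤ ‖(N (φ α) - h) - (-h)‖ := abs_norm_sub_norm_le _ _
    rw [norm_neg] at h1
    have h2 : (N (φ α) - h) - (-h) = N (φ α) := by abel
    rw [h2] at h1
    refine h1.trans ?_
    calc ‖N (φ α)‖ ≤ ‖N‖ * ‖φ α‖ := N.le_opNorm _
      _ ≤ ‖N‖ * (C / α) := mul_le_mul_of_nonneg_left (hbound α hα) (norm_nonneg _)
      _ = ‖N‖ * C / α := by ring
  have htop' : Tendsto (fun α => ‖N (φ α) - h‖) atTop (nhds ‖h‖) := by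
    have hz : Tendsto (fun α : ℝ => ‖N‖ * C / α) atTop (nhds 0) :=
      Tendsto.div_atTop tendsto_const_nhds tendsto_id
    rw [tendsto_iff_norm_sub_tendsto_zero]
    apply squeeze_zero'
    · filter_upwards with α using norm_nonneg _
    · filter_upwards [eventually_gt_atTop (0:ℝ)] with α hα
      simpa [Real.norm_eq_abs] using hnorm α hα
    · exact hz
  have htop : Tendsto (fun α => ‖N (φ α) - h‖ ^ 2) atTop (nhds (‖h‖ ^ 2)) := htop'.pow 2
  refine ⟨hcont, hmono, htop, ?_⟩
  -- IVT
  intro L hL hLε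
  have ev1 : ∀ᶠ α in nhdsWithin 0 (Set.Ioi 0), ‖N (φ α) - h‖ < ε :=
    hL.eventually_lt_const hLε
  obtain ⟨α₀, hα₀ε, hα₀⟩ := (ev1.and self_mem_nhdsWithin).exists
  have hα₀ : (0:ℝ) < α₀ := hα₀
  have hε2 : ε ^ 2 < ‖h‖ ^ 2 := by nlinarith
  have ev2 : ∀ᶠ α in atTop, ε ^ 2 < ‖N (φ α) - h‖ ^ 2 := htop.eventually_const_lt hε2
  obtain ⟨α₁, hα₁ε, hα₁⟩ := ((ev2.and (eventually_gt_atTop α₀)).exists)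
  have hsub : Set.Icc α₀ α₁ ⊆ Set.Ioi 0 := fun x hx => lt_of_lt_of_le hα₀ hx.1
  have hIVT := intermediate_value_Icc hα₁.le (hcont.mono hsub)
  have hmem : ε ^ 2 ∈ Set.Icc (‖N (φ α₀) - h‖ ^ 2) (‖N (φ α₁) - h‖ ^ 2) := by
    constructor
    · nlinarith [norm_nonneg (N (φ α₀) - h)]
    · exact hα₁ε.le
  obtain ⟨α, hαmem, hαeq⟩ := hIVT hmem
  exact ⟨α, hsub hαmem, by simp only at hαeq; rw [hαeq]; ring⟩
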